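/- Let m be an integer and A, B, C integers with gcd(A,B) = gcd(C,B) = 1 satisfying C^2 = A^3 - 432 m^2 B^6. Then ord_2(A) ≠ 1; that is, if 2 divides A then 4 divides A. -/
import Mathlib

lemma zmod16_cube : ∀ a : ZMod 16, (4 * a + 2) ^ 3 = 8 := by decide

lemma zmod16_sq : ∀ c : ZMod 16, c ^ 2 ≠ 8 := by decide

/-- If `C² = A³ - 432 m² B⁶` with `(A, B)` and `(C, B)` coprime, then `ord₂(A) ≠ 1`;
that is, if `2 ∣ A` then `4 ∣ A`. -/
theorem ord2_ne_one (m A B C : ℤ) (hA : A ≠ 0)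
    (hAB : IsCoprime A B) (hCB : IsCoprime C B)
    (hcurve : C ^ 2 = A ^ 3 - 432 * m ^ 2 * B ^ 6) :
    padicValInt 2 A ≠ 1 ∧ ((2 : ℤ) ∣ A → (4 : ℤ) ∣ A) := by
  have key : (2 : ℤ) ∣ A → (4 : ℤ) ∣ A := by
    intro h2
    by_contra h4
    obtain ⟨k, hk⟩ : ∃ k, A = 4 * k + 2 := by
      obtain ⟨j, hj⟩ := h2
      exact ⟨(A - 2) / 4, by omega⟩
    have h16 : (C : ZMod 16) ^ 2 = (A : ZMod 16) ^ 3 - 432 * (m : ZMod 16) ^ 2 * (B : ZMod 16) ^ 6 := by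
      have := congrArg (fun x : ℤ => (x : ZMod 16)) hcurve
      push_cast at this
      exact this
    have hA16 : (A : ZMod 16) = 4 * (k : ZMod 16) + 2 := by rw [hk]; push_cast; ring
    have h432 : (432 : ZMod 16) = 0 := by decide
    rw [hA16, zmod16_cube, h432] at h16
    simp at h16
    exact zmod16_sq _ h16
  refine ⟨?_, key⟩
  intro hval
  have h2 : (2 : ℤ) ∣ A := by
    have := (padicValInt_dvd_iff (p := 2) 1 A).mpr (Or.inr (by omega))
    simpa using this
  have h4 : ((2 : ℤ) : ℤ) ^ 2 ∣ A := by
    have := key h2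
    have : ((2 : ℤ)) ^ 2 = 4 := by norm_num
    rw [this]
    exact key h2
  have := (padicValInt_dvd_iff (p := 2) 2 A).mp (by exact_mod_cast h4)
  rcases this with h | h
  · exact hA h
  · omega
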